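/- arXiv:1704.08592 — 2 statements merged into one kernel-verified Lean document; each statement's English description precedes it below -/
import Mathlib

section
/- Let t ∈ V and let y ∈ P_v(t) be a predecessor of t with respect to source v in G. Then S(t) ⊆ S(y), i.e., every affected source of t is also an affected source of y. -/
open scoped BigOperators

/-- A directed graph on vertex set `V` with positive real edge weights. -/
structure WDigraph (V : Type*) where
  /-- the edge relation -/
  E : V → V → Prop
  /-- the edge weights -/
  w : V → V → ℝ
  /-- weights of edges are positive -/
  pos : ∀ a b, E a b → 0 < w a b

namespace WDigraph

variable {V : Type*} [Fintype V] [DecidableEq V]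

/-- `p` is a simple path from `s` to `t` in `G`: a nonempty list of pairwise
distinct vertices starting at `s`, ending at `t`, consecutive vertices joined
by edges. (Since all weights are positive, every shortest path is simple, so
it suffices to consider simple paths throughout.) -/
def IsPath (G : WDigraph V) (s t : V) (p : List V) : Prop :=
  List.Chain' G.E p ∧ p.head? = some s ∧ p.getLast? = some t ∧ p.Nodup

/-- The total weight of a list of vertices (sum of the weights of consecutive pairs). -/
def pw (G : WDigraph V) : List V → ℝ
  | [] => 0
  | [_] => 0
  | a :: b :: r => G.w a b + G.pw (b :: r)

/-- `d(s,t)`: shortest-path distance from `s` to `t`, equal to `⊤` (infinity)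
if `t` is unreachable from `s`. -/
noncomputable def dist (G : WDigraph V) (s t : V) : EReal :=
  sInf ((fun p => (G.pw p : EReal)) '' {p | G.IsPath s t p})

/-- The set of shortest `s`-`t` paths in `G`. -/
def SP (G : WDigraph V) (s t : V) : Set (List V) :=
  {p | G.IsPath s t p ∧ (G.pw p : EReal) = G.dist s t}

/-- `σ_{st}`: the number of shortest `s`-`t` paths in `G`. -/
noncomputable def sigma (G : WDigraph V) (s t : V) : ℕ :=
  (G.SP s t).ncard

/-- `σ_{st}(v)`: the number of shortest `s`-`t` paths in `G` that contain `v`. -/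
noncomputable def sigmaV (G : WDigraph V) (s t v : V) : ℕ :=
  {p ∈ G.SP s t | v ∈ p}.ncard

/-- `σ_{st}(v,w)`: the number of shortest `s`-`t` paths in `G` using the edge `(v,w)`. -/
noncomputable def sigmaE (G : WDigraph V) (s t v w : V) : ℕ :=
  {p ∈ G.SP s t | [v, w] <:+: p}.ncard

/-- `P_s(t)`: the set of predecessors of `t` with respect to source `s`:
nodes `y` with `(y,t) ∈ E` and `d(s,y) + ω(y,t) = d(s,t) < ∞`. -/
def pred (G : WDigraph V) (s t : V) : Set V :=
  {y | G.E y t ∧ G.dist s y + (G.w y t : EReal) = G.dist s t ∧ G.dist s t < ⊤}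

/-- `δ_{s•}(v)`: Brandes's one-sided dependency of `s` on `v`
(a summand is `0` whenever its denominator is `0`, which is automatic since
in Lean division by zero yields zero). -/
noncomputable def delta (G : WDigraph V) (s v : V) : ℝ :=
  ∑ᶠ t ∈ {t : V | t ≠ s ∧ t ≠ v}, (G.sigmaV s t v : ℝ) / (G.sigma s t : ℝ)

/-- `c_B(v)`: the betweenness centrality of `v`. -/
noncomputable def bc (G : WDigraph V) (v : V) : ℝ :=
  ∑ᶠ s ∈ {s : V | s ≠ v}, G.delta s v

/-- `G'` is obtained from `G` by the incremental update `(u, v, ω'(u,v))`: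
either a new edge `(u,v) ∉ E` is inserted with positive weight, or the weight
of the existing edge `(u,v)` is decreased; all other edges and weights are
unchanged. (Positivity of all weights is part of the `WDigraph` structure.) -/
structure IsUpdate (G G' : WDigraph V) (u v : V) : Prop where
  /-- the updated edge is present in `G'` -/
  edge' : G'.E u v
  /-- `E' = E ∪ {(u,v)}` -/
  edge_iff : ∀ a b, G'.E a b ↔ G.E a b ∨ a = u ∧ b = v
  /-- `ω'` agrees with `ω` on all edges other than `(u,v)` -/
  weight_eq : ∀ a b, ¬(a = u ∧ b = v) → G'.w a b = G.w a b
  /-- either an insertion of a new edge, or a weight decrease of an existing one -/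
  insert_or_decrease : ¬ G.E u v ∨ (G.E u v ∧ G'.w u v < G.w u v)

/-- `S(t)`: the affected sources of `t`. -/
def affS (G G' : WDigraph V) (t : V) : Set V :=
  {s | G.dist s t > G'.dist s t ∨ G.sigma s t ≠ G'.sigma s t}

/-- `T(s)`: the affected targets of `s`. -/
def affT (G G' : WDigraph V) (s : V) : Set V :=
  {t | G.dist s t > G'.dist s t ∨ G.sigma s t ≠ G'.sigma s t}

/-- `Δ_{s•}(v) = Σ_{t ∈ T(s), t ≠ v} σ_{st}(v)/σ_{st}`, computed in `G`
(`0`-convention for zero denominators). -/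
noncomputable def Delta (G G' : WDigraph V) (s v : V) : ℝ :=
  ∑ᶠ t ∈ {t : V | t ∈ affT G G' s ∧ t ≠ v}, (G.sigmaV s t v : ℝ) / (G.sigma s t : ℝ)

/-- `Δ'_{s•}(v) = Σ_{t ∈ T(s), t ≠ v} σ'_{st}(v)/σ'_{st}`, computed in `G'`
(`0`-convention for zero denominators). -/
noncomputable def Delta' (G G' : WDigraph V) (s v : V) : ℝ :=
  ∑ᶠ t ∈ {t : V | t ∈ affT G G' s ∧ t ≠ v}, (G'.sigmaV s t v : ℝ) / (G'.sigma s t : ℝ)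

set_option linter.unusedSectionVars false

/- ## auxiliary lemmas -/

lemma pw_append (G : WDigraph V) : ∀ (l : List V) (a : V) (m : List V),
    G.pw (l ++ a :: m) = G.pw (l ++ [a]) + G.pw (a :: m)
  | [], a, m => by simp [pw]
  | [b], a, m => by simp [pw]
  | b :: c :: l, a, m => by
    have ih := pw_append G (c :: l) a m
    show G.w b c + G.pw (c :: l ++ a :: m) = G.w b c + G.pw (c :: l ++ [a]) + G.pw (a :: m)
    rw [ih]; ring

lemma pairs_of_chain' {R : V → V → Prop} {p : List V} {a b : V}
    (hc : List.Chain' R p) (hab : [a, b] <:+: p) : R a b := by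
  have := hc.infix hab
  simpa using List.isChain_cons_cons.mp this |>.1

lemma chain'_of_pairs {R : V → V → Prop} : ∀ {p : List V},
    (∀ a b, [a, b] <:+: p → R a b) → List.Chain' R p
  | [], _ => List.isChain_nil
  | [_], _ => List.isChain_singleton _
  | x :: y :: r, h => by
    rw [List.Chain', List.isChain_cons_cons]
    refine ⟨h x y ⟨[], r, rfl⟩, chain'_of_pairs fun a b hab => h a b ?_⟩
    obtain ⟨pre, post, heq⟩ := hab
    exact ⟨x :: pre, post, congrArg (x :: ·) heq⟩

lemma pw_le_of {G G' : WDigraph V} : ∀ {p : List V},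
    (∀ a b, [a, b] <:+: p → G.w a b ≤ G'.w a b) → G.pw p ≤ G'.pw p
  | [], _ => le_refl _
  | [_], _ => le_refl _
  | x :: y :: r, h => by
    have h1 : G.w x y ≤ G'.w x y := h x y ⟨[], r, rfl⟩
    have h2 : G.pw (y :: r) ≤ G'.pw (y :: r) := pw_le_of fun a b ⟨pre, post, hab⟩ =>
      h a b ⟨x :: pre, post, congrArg (x :: ·) hab⟩
    show G.w x y + G.pw (y :: r) ≤ G'.w x y + G'.pw (y :: r)
    linarith

lemma pw_eq_of {G G' : WDigraph V} {p : List V}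
    (h : ∀ a b, [a, b] <:+: p → G.w a b = G'.w a b) : G.pw p = G'.pw p :=
  le_antisymm (pw_le_of fun a b hab => (h a b hab).le)
    (pw_le_of fun a b hab => (h a b hab).ge)

lemma pw_lt_of {G G' : WDigraph V} {p : List V} {pre post : List V} {a b : V}
    (hp : p = pre ++ a :: b :: post)
    (h : ∀ c d, [c, d] <:+: p → G.w c d ≤ G'.w c d) (hab : G.w a b < G'.w a b) :
    G.pw p < G'.pw p := by
  subst hp
  have e1 : ∀ (H : WDigraph V), H.pw (pre ++ a :: b :: post)
      = H.pw (pre ++ [a]) + (H.w a b + H.pw (b :: post)) := fun H => by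
    rw [pw_append H pre a (b :: post)]; rfl
  rw [e1 G, e1 G']
  have hpre : (pre ++ [a]) <+: pre ++ a :: b :: post := ⟨b :: post, by simp⟩
  have hsuf : (b :: post) <:+ pre ++ a :: b :: post := ⟨pre ++ [a], by simp⟩
  have l1 : G.pw (pre ++ [a]) ≤ G'.pw (pre ++ [a]) := pw_le_of fun c d hcd =>
    h c d (hcd.trans hpre.isInfix)
  have l2 : G.pw (b :: post) ≤ G'.pw (b :: post) := pw_le_of fun c d hcd =>
    h c d (hcd.trans hsuf.isInfix)
  linarith

lemma pw_nonneg {G : WDigraph V} : ∀ {p : List V}, List.Chain' G.E p → 0 ≤ G.pw p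
  | [], _ => le_refl _
  | [_], _ => le_refl _
  | x :: y :: r, h => by
    obtain ⟨h1, h2⟩ := List.isChain_cons_cons.mp h
    have := pw_nonneg h2
    have := G.pos x y h1
    show 0 ≤ G.w x y + G.pw (y :: r)
    linarith

lemma pw_pos {G : WDigraph V} {p : List V} (hc : List.Chain' G.E p) (hl : 2 ≤ p.length) :
    0 < G.pw p := by
  match p, hl with
  | x :: y :: r, _ =>
    obtain ⟨h1, h2⟩ := List.isChain_cons_cons.mp hc
    have := pw_nonneg h2
    have := G.pos x y h1
    show 0 < G.w x y + G.pw (y :: r)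
    linarith

lemma isPath_finite (G : WDigraph V) (s t : V) : {p | G.IsPath s t p}.Finite := by
  apply Set.Finite.subset (List.finite_length_le V (Fintype.card V))
  intro p hp
  exact hp.2.2.2.length_le_card

lemma dist_le {G : WDigraph V} {s t : V} {p : List V} (h : G.IsPath s t p) :
    G.dist s t ≤ (G.pw p : EReal) :=
  sInf_le ⟨p, h, rfl⟩

lemma exists_shortest {G : WDigraph V} {s t : V} (h : G.dist s t < ⊤) :
    ∃ p, G.IsPath s t p ∧ (G.pw p : EReal) = G.dist s t := by
  by_cases hne : {p | G.IsPath s t p}.Nonempty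
  · have hfin : ((fun p => (G.pw p : EReal)) '' {p | G.IsPath s t p}).Finite :=
      (isPath_finite G s t).image _
    have hmem := (hne.image _).csInf_mem hfin
    obtain ⟨p, hp, hpw⟩ := hmem
    exact ⟨p, hp, hpw⟩
  · exfalso
    rw [Set.not_nonempty_iff_eq_empty] at hne
    rw [dist, hne] at h
    simp at h

lemma not_nodup_split {l : List V} (h : ¬ l.Nodup) :
    ∃ (x : V) (l1 l2 l3 : List V), l = l1 ++ x :: l2 ++ x :: l3 := by
  induction l with
  | nil => simp at h
  | cons a l ih =>
    rw [List.nodup_cons] at h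
    push_neg at h
    by_cases ha : a ∈ l
    · obtain ⟨l2, l3, rfl⟩ := List.append_of_mem ha
      exact ⟨a, [], l2, l3, rfl⟩
    · obtain ⟨x, l1, l2, l3, rfl⟩ := ih (h ha)
      exact ⟨x, a :: l1, l2, l3, rfl⟩

lemma exists_path_of_walk (G : WDigraph V) :
    ∀ (n : ℕ) (p : List V), p.length ≤ n → ∀ s t, List.Chain' G.E p →
    p.head? = some s → p.getLast? = some t →
    ∃ q, G.IsPath s t q ∧ G.pw q ≤ G.pw p ∧ (¬ p.Nodup → G.pw q < G.pw p) := by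
  intro n
  induction n with
  | zero =>
    intro p hp s t _ hh _
    obtain rfl : p = [] := List.length_eq_zero_iff.mp (Nat.le_zero.mp hp)
    simp at hh
  | succ n ih =>
    intro p hp s t hc hh hl
    by_cases hnd : p.Nodup
    · exact ⟨p, ⟨hc, hh, hl, hnd⟩, le_refl _, fun h => absurd hnd h⟩
    · obtain ⟨x, l1, l2, l3, rfl⟩ := not_nodup_split hnd
      set p := l1 ++ x :: l2 ++ x :: l3 with hpdef
      set p' := l1 ++ x :: l3 with hp'def
      -- length
      have hlen : p'.length ≤ n := by
        have : p.length ≤ n + 1 := hp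
        simp [hpdef, hp'def] at this ⊢
        omega
      -- chain
      have hsplit1 : p = (l1 ++ [x]) ++ (l2 ++ x :: l3) := by simp [hpdef]
      have hsplit2 : p' = (l1 ++ [x]) ++ l3 := by simp [hp'def]
      have hc1 : List.Chain' G.E (l1 ++ [x]) := hc.prefix ⟨l2 ++ x :: l3, hsplit1.symm⟩
      have hcx3 : List.Chain' G.E (x :: l3) := hc.suffix ⟨l1 ++ x :: l2, by simp [hpdef]⟩
      have hc' : List.Chain' G.E p' := by
        rw [hsplit2, List.Chain', List.isChain_append]
        refine ⟨hc1, hcx3.tail, ?_⟩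
        intro a ha b hb
        rw [List.getLast?_concat] at ha
        obtain rfl : x = a := by simpa using ha
        exact (List.isChain_cons.mp hcx3).1 b hb
      -- head?
      have hh' : p'.head? = some s := by
        rcases l1 with _ | ⟨c, l1⟩
        · simpa [hpdef, hp'def] using hh
        · simpa [hpdef, hp'def] using hh
      -- getLast?
      have hl' : p'.getLast? = some t := by
        have e1 : p.getLast? = (x :: l3).getLast? := by
          rw [hsplit1, List.getLast?_append_of_ne_nil]
          · rcases l2 with _ | ⟨c, l2⟩
            · rfl
            · rw [show (c :: l2) ++ x :: l3 = (c :: l2) ++ (x :: l3) from rfl,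
                List.getLast?_append_of_ne_nil]
              simp
          · simp
        have e2 : p'.getLast? = (x :: l3).getLast? := by
          rw [hp'def, List.getLast?_append_of_ne_nil]
          simp
        rw [e2, ← e1, hl]
      -- weight
      have hw : G.pw p' < G.pw p := by
        have e0 : p = (l1 ++ (x :: l2)) ++ x :: l3 := by simp [hpdef]
        have e1 : G.pw p = G.pw ((l1 ++ (x :: l2)) ++ [x]) + G.pw (x :: l3) := by
          rw [e0]; exact pw_append G _ x l3
        have e2' : (l1 ++ (x :: l2)) ++ [x] = l1 ++ x :: (l2 ++ [x]) := by simp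
        have e2 : G.pw ((l1 ++ (x :: l2)) ++ [x])
            = G.pw (l1 ++ [x]) + G.pw ((x :: l2) ++ [x]) := by
          rw [e2']; exact pw_append G l1 x (l2 ++ [x])
        have e3 : G.pw p' = G.pw (l1 ++ [x]) + G.pw (x :: l3) := pw_append G l1 x l3
        have hcyc : List.Chain' G.E ((x :: l2) ++ [x]) :=
          hc.infix ⟨l1, l3, by simp [hpdef]⟩
        have hpos : 0 < G.pw ((x :: l2) ++ [x]) := pw_pos hcyc (by simp)
        rw [e1, e2, e3]; linarith
      obtain ⟨q, hq, hle, _⟩ := ih p' hlen s t hc' hh' hl'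
      exact ⟨q, hq, by linarith, fun _ => by linarith⟩



set_option maxHeartbeats 1000000

lemma not_infix_cons {u v : V} {z : List V} (hnd : (v :: z).Nodup) : ¬ [u, v] <:+: (v :: z) := by
  rintro ⟨pre, post, hpp⟩
  have hvz : v ∉ z := (List.nodup_cons.mp hnd).1
  apply hvz
  cases pre with
  | nil =>
    simp only [List.nil_append, List.cons_append, List.cons.injEq] at hpp
    exact hpp.2 ▸ List.mem_cons_self
  | cons c pre' =>
    simp only [List.cons_append, List.cons.injEq, List.append_assoc] at hpp
    exact hpp.2 ▸ (by simp : v ∈ pre' ++ ([u, v] ++ post))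

section Update

variable {G G' : WDigraph V} {u v : V}

lemma IsUpdate.E_mono (h : IsUpdate G G' u v) {a b : V} (hab : G.E a b) : G'.E a b :=
  (h.edge_iff a b).mpr (Or.inl hab)

lemma IsUpdate.w'_le (h : IsUpdate G G' u v) {a b : V} (hab : G.E a b) : G'.w a b ≤ G.w a b := by
  by_cases huv : a = u ∧ b = v
  · obtain ⟨rfl, rfl⟩ := huv
    rcases h.insert_or_decrease with h1 | ⟨_, h2⟩
    · exact absurd hab h1
    · exact h2.le
  · exact (h.weight_eq a b huv).le

lemma IsUpdate.chain'_mono (h : IsUpdate G G' u v) {p : List V} (hc : List.Chain' G.E p) :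
    List.Chain' G'.E p :=
  hc.imp fun _ _ hab => h.E_mono hab

lemma IsUpdate.isPath_mono (h : IsUpdate G G' u v) {s t : V} {p : List V}
    (hp : G.IsPath s t p) : G'.IsPath s t p :=
  ⟨h.chain'_mono hp.1, hp.2⟩

lemma IsUpdate.pw'_le_pw (h : IsUpdate G G' u v) {p : List V} (hc : List.Chain' G.E p) :
    G'.pw p ≤ G.pw p :=
  pw_le_of fun a b hab => h.w'_le (pairs_of_chain' hc hab)

lemma IsUpdate.dist'_le_dist (h : IsUpdate G G' u v) (s t : V) : G'.dist s t ≤ G.dist s t := by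
  rcases lt_or_ge (G.dist s t) ⊤ with hd | hd
  · obtain ⟨p, hp, hpw⟩ := exists_shortest hd
    calc G'.dist s t ≤ (G'.pw p : EReal) := dist_le (h.isPath_mono hp)
    _ ≤ (G.pw p : EReal) := by exact_mod_cast h.pw'_le_pw hp.1
    _ = G.dist s t := hpw
  · exact le_top.trans hd

lemma IsUpdate.pw'_eq (h : IsUpdate G G' u v) {p : List V} (hn : ¬ [u, v] <:+: p) :
    G'.pw p = G.pw p :=
  pw_eq_of fun a b hab => h.weight_eq a b (by rintro ⟨rfl, rfl⟩; exact hn hab)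

lemma IsUpdate.chain_of_not_infix (h : IsUpdate G G' u v) {p : List V}
    (hc : List.Chain' G'.E p) (hn : ¬ [u, v] <:+: p) : List.Chain' G.E p :=
  chain'_of_pairs fun a b hab => by
    rcases (h.edge_iff a b).mp (pairs_of_chain' hc hab) with h1 | ⟨rfl, rfl⟩
    · exact h1
    · exact absurd hab hn

lemma IsUpdate.SP_subset (h : IsUpdate G G' u v) {s t : V}
    (hd : G'.dist s t = G.dist s t) : G.SP s t ⊆ G'.SP s t := by
  rintro p ⟨hp, hpw⟩
  by_cases hin : [u, v] <:+: p
  · exfalso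
    rcases h.insert_or_decrease with h1 | ⟨_, h2⟩
    · exact h1 (pairs_of_chain' hp.1 hin)
    · obtain ⟨pre, post, hq⟩ := hin
      have hq' : p = pre ++ u :: v :: post := by rw [← hq]; simp
      have hlt : G'.pw p < G.pw p :=
        pw_lt_of hq' (fun c d hcd => h.w'_le (pairs_of_chain' hp.1 hcd)) h2
      have hd2 : G'.dist s t ≤ (G'.pw p : EReal) := dist_le (h.isPath_mono hp)
      rw [hd, ← hpw] at hd2
      exact absurd hd2 (by exact_mod_cast not_le.mpr hlt)
  · exact ⟨h.isPath_mono hp, by rw [h.pw'_eq hin, hpw, hd]⟩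

lemma IsUpdate.exists_new_path (h : IsUpdate G G' u v) {s t : V}
    (hst : s ∈ affS G G' t) :
    ∃ q, G'.IsPath s t q ∧ (G'.pw q : EReal) = G'.dist s t ∧ [u, v] <:+: q := by
  have hle := h.dist'_le_dist s t
  rcases hle.lt_or_eq with hd | hd
  · have hdtop : G'.dist s t < ⊤ := hd.trans_le le_top
    obtain ⟨q, hq, hpw⟩ := exists_shortest hdtop
    refine ⟨q, hq, hpw, ?_⟩
    by_contra hin
    have hc : List.Chain' G.E q := h.chain_of_not_infix hq.1 hin
    have hd2 : G.dist s t ≤ (G.pw q : EReal) := dist_le ⟨hc, hq.2⟩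
    rw [← h.pw'_eq hin, hpw] at hd2
    exact absurd hd (not_lt.mpr hd2)
  · rcases hst with hlt | hs
    · exact absurd hd.ge (not_le.mpr hlt)
    · have hsub := h.SP_subset hd
      have hne : G.SP s t ≠ G'.SP s t := fun he => hs (by rw [sigma, sigma, he])
      obtain ⟨q, hq', hqn⟩ := Set.exists_of_ssubset (hsub.ssubset_of_ne hne)
      refine ⟨q, hq'.1, hq'.2, ?_⟩
      by_contra hin
      apply hqn
      have hc : List.Chain' G.E q := h.chain_of_not_infix hq'.1.1 hin
      refine ⟨⟨hc, hq'.1.2.1, hq'.1.2.2.1, hq'.1.2.2.2⟩, ?_⟩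
      rw [← h.pw'_eq hin, hq'.2, hd]

end Update


/-- Let `t ∈ V` and let `y ∈ P_v(t)` be a predecessor of `t` with
respect to source `v` in `G`. Then `S(t) ⊆ S(y)`: every affected source of `t`
is also an affected source of `y`. -/
theorem affS_subset_of_pred (G G' : WDigraph V) (u v : V)
    (h : IsUpdate G G' u v) (t y : V) (hy : y ∈ G.pred v t) :
    affS G G' t ⊆ affS G G' y := by
  obtain ⟨hyt, hsum, htop⟩ := hy
  -- `dist v y` is finite; extract a shortest v→y path r
  have hvy_top : G.dist v y < ⊤ := by
    by_contra hcon
    rw [not_lt, top_le_iff] at hcon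
    rw [hcon, EReal.top_add_coe] at hsum
    rw [← hsum] at htop
    exact absurd htop (lt_irrefl _)
  obtain ⟨r, hr, hrw⟩ := exists_shortest hvy_top
  have hvt : G.dist v t = ((G.pw r + G.w y t : ℝ) : EReal) := by
    rw [← hsum, ← hrw]; push_cast; ring
  intro s hst
  obtain ⟨q, hq, hqw, hqin⟩ := h.exists_new_path hst
  obtain ⟨x, z, hxz⟩ := hqin
  have hqeq : q = (x ++ [u]) ++ v :: z := by rw [← hxz]; simp
  -- the suffix v :: z is a G-path from v to t
  have hchz' : List.Chain' G'.E (v :: z) := hq.1.suffix ⟨x ++ [u], hqeq.symm⟩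
  have hnodz : (v :: z).Nodup := hq.2.2.2.sublist (List.IsSuffix.sublist ⟨x ++ [u], hqeq.symm⟩)
  have hninz : ¬ [u, v] <:+: (v :: z) := not_infix_cons hnodz
  have hchz : List.Chain' G.E (v :: z) := h.chain_of_not_infix hchz' hninz
  have hlastz : (v :: z).getLast? = some t := by
    have := hq.2.2.1
    rw [hqeq, List.getLast?_append_of_ne_nil _ (by simp : (v :: z) ≠ [])] at this
    exact this
  have hpathz : G.IsPath v t (v :: z) := ⟨hchz, rfl, hlastz, hnodz⟩
  -- key inequality (i): pw r + w y t ≤ pw (v :: z)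
  have hineq1 : G.pw r + G.w y t ≤ G.pw (v :: z) := by
    have := dist_le hpathz
    rw [hvt] at this
    exact_mod_cast this
  -- split the weight of q
  have hsplitq : G'.pw q = G'.pw ((x ++ [u]) ++ [v]) + G.pw (v :: z) := by
    rw [hqeq, pw_append G' (x ++ [u]) v z, h.pw'_eq hninz]
  -- r starts with v
  have hrne : r ≠ [] := by
    intro he; rw [he] at hr; exact absurd hr.2.1 (by simp)
  obtain ⟨rt, hrv⟩ : ∃ rt, r = v :: rt := by
    rcases r with _ | ⟨v', rt⟩
    · exact absurd rfl hrne
    · have hv : v' = v := by simpa using hr.2.1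
      exact ⟨rt, by rw [hv]⟩
  -- the combined walk c
  set c : List V := (x ++ [u]) ++ r with hcdef
  have hcc : List.Chain' G'.E c := by
    rw [hcdef, List.Chain', List.isChain_append]
    refine ⟨hq.1.prefix ⟨v :: z, hqeq.symm⟩, h.chain'_mono hr.1, ?_⟩
    intro a ha b hb
    obtain rfl : a = u := by
      rw [List.getLast?_concat] at ha; simpa using ha.symm
    obtain rfl : b = v := by rw [hr.2.1] at hb; simpa using hb.symm
    exact h.edge'
  have hch : c.head? = some s := by
    have hqh := hq.2.1
    rw [hqeq, List.head?_append_of_ne_nil _ (by simp : x ++ [u] ≠ [])] at hqh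
    rw [hcdef, List.head?_append_of_ne_nil _ (by simp : x ++ [u] ≠ [])]
    exact hqh
  have hcl : c.getLast? = some y := by
    rw [hcdef, List.getLast?_append_of_ne_nil _ hrne]
    exact hr.2.2.1
  have hninrt : ¬ [u, v] <:+: (v :: rt) := not_infix_cons (hrv ▸ hr.2.2.2)
  have hpwc : G'.pw c = G'.pw ((x ++ [u]) ++ [v]) + G.pw r := by
    rw [hcdef, hrv, pw_append G' (x ++ [u]) v rt, h.pw'_eq hninrt]
  -- key inequality (ii): pw' c + w y t ≤ pw' q
  have hineq2 : G'.pw c + G.w y t ≤ G'.pw q := by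
    rw [hpwc, hsplitq]; linarith
  -- simple path from the walk c
  obtain ⟨q', hq'p, hq'le, hq'str⟩ :=
    exists_path_of_walk G' c.length c le_rfl s y hcc hch hcl
  have hd'sy : G'.dist s y ≤ (G'.pw q' : EReal) := dist_le hq'p
  -- dispose of the case dist s y = ⊤
  by_cases hsy : G.dist s y = ⊤
  · exact Or.inl (by rw [hsy]; exact (hd'sy.trans_lt (EReal.coe_lt_top _)))
  obtain ⟨m, hm, hmw⟩ := exists_shortest (lt_top_iff_ne_top.mpr hsy)
  -- triangle: dist s t ≤ pw m + w y t
  have hmne : m ≠ [] := by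
    intro he; rw [he] at hm; exact absurd hm.2.1 (by simp)
  have hmy : m.dropLast ++ [y] = m := by
    have h1 := List.getLast?_eq_getLast hmne
    have h2 : m.getLast hmne = y := by
      have h3 := hm.2.2.1; rw [h1] at h3; simpa using h3
    rw [← h2]
    exact List.dropLast_append_getLast hmne
  have hwalkmt : List.Chain' G.E (m ++ [t]) := by
    rw [List.Chain', List.isChain_append]
    refine ⟨hm.1, List.isChain_singleton t, ?_⟩
    intro a ha b hb
    obtain rfl : a = y := by rw [hm.2.2.1] at ha; simpa using ha.symm
    obtain rfl : b = t := by simpa using hb.symm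
    exact hyt
  have hpwmt : G.pw (m ++ [t]) = G.pw m + G.w y t := by
    have e : m ++ [t] = m.dropLast ++ y :: [t] := by rw [← hmy]; simp
    rw [e, pw_append G m.dropLast y [t], hmy]
    simp [pw]
  obtain ⟨q2, hq2p, hq2le, _⟩ :=
    exists_path_of_walk G (m ++ [t]).length (m ++ [t]) le_rfl s t hwalkmt
      (by rw [List.head?_append_of_ne_nil _ hmne]; exact hm.2.1)
      List.getLast?_concat
  have htri : G.dist s t ≤ ((G.pw m + G.w y t : ℝ) : EReal) := by
    refine (dist_le hq2p).trans ?_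
    exact_mod_cast hq2le.trans hpwmt.le
  -- case split on whether the s-t distance strictly decreased
  have hle := h.dist'_le_dist s t
  rcases hle.lt_or_eq with hcase | hcase
  · -- strict decrease: pw' c < pw m, so dist' s y < dist s y
    left
    have h1 : (G'.pw q : EReal) < ((G.pw m + G.w y t : ℝ) : EReal) :=
      lt_of_lt_of_le (hqw ▸ hcase) htri
    have h1' : G'.pw q < G.pw m + G.w y t := by exact_mod_cast h1
    have h2 : G'.pw c < G.pw m := by linarith
    rw [← hmw]
    calc G'.dist s y ≤ (G'.pw q' : EReal) := hd'sy
    _ < (G.pw m : EReal) := by exact_mod_cast lt_of_le_of_lt hq'le h2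
  · -- distances equal
    have h1 : G'.pw q ≤ G.pw m + G.w y t := by
      have : (G'.pw q : EReal) ≤ ((G.pw m + G.w y t : ℝ) : EReal) := by
        rw [hqw, hcase]; exact htri
      exact_mod_cast this
    have hWcle : G'.pw c ≤ G.pw m := by linarith
    by_cases hdeq : G'.dist s y = G.dist s y
    · -- distances to y equal: produce a new shortest path, so sigma changes
      right
      have hall : (G.pw m : EReal) ≤ (G'.pw q' : EReal) := by
        calc (G.pw m : EReal) = G.dist s y := hmw
        _ = G'.dist s y := hdeq.symm
        _ ≤ (G'.pw q' : EReal) := hd'sy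
      have hall' : G.pw m ≤ G'.pw q' := by exact_mod_cast hall
      have hndc : c.Nodup := by
        by_contra hnd
        have := hq'str hnd
        linarith
      have hWc : G'.pw c = G.pw m := by
        have := hq'le
        linarith
      have hcin : [u, v] <:+: c := ⟨x, rt, by rw [hcdef, hrv]; simp⟩
      have hcSP' : c ∈ G'.SP s y := by
        refine ⟨⟨hcc, hch, hcl, hndc⟩, ?_⟩
        rw [hWc, hmw, hdeq]
      have hcnot : c ∉ G.SP s y := by
        rintro ⟨hcp, hcw⟩
        rcases h.insert_or_decrease with h1' | ⟨_, h2'⟩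
        · exact h1' (pairs_of_chain' hcp.1 hcin)
        · obtain ⟨pre, post, hpp⟩ := hcin
          have hpp' : c = pre ++ u :: v :: post := by rw [← hpp]; simp
          have hlt : G'.pw c < G.pw c :=
            pw_lt_of hpp' (fun c' d' hcd => h.w'_le (pairs_of_chain' hcp.1 hcd)) h2'
          have hGc : (G.pw c : EReal) = (G.pw m : EReal) := by rw [hcw, hmw]
          have : G.pw c = G.pw m := by exact_mod_cast hGc
          linarith
      have hss : G.SP s y ⊂ G'.SP s y :=
        (h.SP_subset hdeq).ssubset_of_ne (fun he => hcnot (he ▸ hcSP'))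
      have hfin : (G'.SP s y).Finite :=
        (isPath_finite G' s y).subset fun p hp => hp.1
      exact (Set.ncard_lt_ncard hss hfin).ne
    · exact Or.inl (lt_of_le_of_ne (h.dist'_le_dist s y) hdeq)

end WDigraph
end

section
/- Distances and shortest-path counts into u and out of v are not affected by the update: for every s ∈ V, d'(s,u) = d(s,u) and σ'_{su} = σ_{su}, and for every t ∈ V, d'(v,t) = d(v,t) and σ'_{vt} = σ_{vt}. -/
open scoped BigOperators

namespace WDigraph

variable {V : Type*} [Fintype V] [DecidableEq V]

/-- On paths avoiding the consecutive pair `u, v`, chains and weights agree. -/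
lemma chain_pw_eq {G G' : WDigraph V} {u v : V} (h : IsUpdate G G' u v) :
    ∀ p : List V, ¬ [u, v] <:+: p →
      (List.Chain' G'.E p ↔ List.Chain' G.E p) ∧ G'.pw p = G.pw p := by
  intro p
  induction p with
  | nil => intro _; exact ⟨⟨fun _ => List.isChain_nil, fun _ => List.isChain_nil⟩, rfl⟩
  | cons a q ih =>
    cases q with
    | nil => intro _; exact ⟨⟨fun _ => List.isChain_singleton _, fun _ => List.isChain_singleton _⟩, rfl⟩
    | cons b r =>
      intro hinf
      have hne : ¬ (a = u ∧ b = v) := by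
        rintro ⟨rfl, rfl⟩
        exact hinf ⟨[], r, by simp⟩
      have htail : ¬ [u, v] <:+: (b :: r) := fun hi =>
        hinf (hi.trans (List.suffix_cons a (b :: r)).isInfix)
      obtain ⟨ih1, ih2⟩ := ih htail
      constructor
      · simp only [List.Chain', List.isChain_cons_cons] at ih1 ⊢; rw [ih1]
        have : G'.E a b ↔ G.E a b := by
          rw [h.edge_iff]
          exact ⟨fun hc => hc.resolve_right hne, Or.inl⟩
        rw [this]
      · show G'.w a b + G'.pw (b :: r) = G.w a b + G.pw (b :: r)
        rw [h.weight_eq a b hne, ih2]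

lemma not_infix_of_getLast {u v : V} {p : List V} (hlast : p.getLast? = some u)
    (hnd : p.Nodup) : ¬ [u, v] <:+: p := by
  rintro ⟨s, t, hst⟩
  subst hst
  cases t with
  | nil =>
    have huv : u ≠ v := by
      have : ([u, v] : List V).Nodup :=
        (List.infix_append s [u, v] []).sublist.nodup hnd
      simpa using this
    have : (s ++ [u, v] ++ ([] : List V)).getLast? = some v := by
      simp [List.getLast?_append]
    rw [hlast] at this
    exact huv (by simpa using this)
  | cons c t' =>
    have hx : (c :: t').getLast? = some ((c :: t').getLast (by simp)) :=
      List.getLast?_eq_getLast (by simp)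
    have h1 : (s ++ [u, v] ++ c :: t').getLast? = (c :: t').getLast? := by
      rw [List.append_assoc, List.getLast?_append, List.getLast?_append, hx]; rfl
    rw [hlast] at h1
    have hmem : u ∈ c :: t' := by
      have := List.mem_getLast?_eq_getLast (l := c :: t') h1.symm
      obtain ⟨h', heq⟩ := this
      rw [heq]; exact List.getLast_mem h'
    exact (List.disjoint_of_nodup_append hnd) (by simp) hmem

lemma not_infix_of_head {u v : V} {p : List V} (hhead : p.head? = some v)
    (hnd : p.Nodup) : ¬ [u, v] <:+: p := by
  rintro ⟨s, t, hst⟩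
  subst hst
  cases s with
  | nil =>
    have huv : u ≠ v := by
      have : ([u, v] : List V).Nodup :=
        (List.infix_append [] [u, v] t).sublist.nodup hnd
      simpa using this
    simp at hhead
    exact huv hhead
  | cons a s' =>
    have h1 : ((a :: s') ++ [u, v] ++ t).head? = some a := by simp
    rw [hhead] at h1
    have hmem : v ∈ a :: s' := by
      rw [show a = v from by simpa using h1.symm]; simp
    have hnd' := hnd
    rw [List.append_assoc, List.nodup_append] at hnd'
    exact hnd'.2.2 v hmem v (by simp) rfl

/-- Paths into `u` are the same in `G` and `G'`, with the same weights. -/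
lemma path_to_u_eq {G G' : WDigraph V} {u v : V} (h : IsUpdate G G' u v) (s : V) :
    {p | G'.IsPath s u p} = {p | G.IsPath s u p} ∧
      ∀ p, G.IsPath s u p → G'.pw p = G.pw p := by
  have key : ∀ p : List V, p.getLast? = some u → p.Nodup →
      ((List.Chain' G'.E p ↔ List.Chain' G.E p) ∧ G'.pw p = G.pw p) :=
    fun p hl hn => chain_pw_eq h p (not_infix_of_getLast hl hn)
  constructor
  · ext p
    simp only [Set.mem_setOf_eq, IsPath]
    constructor
    · rintro ⟨hc, hh, hl, hn⟩
      exact ⟨(key p hl hn).1.mp hc, hh, hl, hn⟩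
    · rintro ⟨hc, hh, hl, hn⟩
      exact ⟨(key p hl hn).1.mpr hc, hh, hl, hn⟩
  · rintro p ⟨_, _, hl, hn⟩
    exact (key p hl hn).2

/-- Paths out of `v` are the same in `G` and `G'`, with the same weights. -/
lemma path_from_v_eq {G G' : WDigraph V} {u v : V} (h : IsUpdate G G' u v) (t : V) :
    {p | G'.IsPath v t p} = {p | G.IsPath v t p} ∧
      ∀ p, G.IsPath v t p → G'.pw p = G.pw p := by
  have key : ∀ p : List V, p.head? = some v → p.Nodup →
      ((List.Chain' G'.E p ↔ List.Chain' G.E p) ∧ G'.pw p = G.pw p) :=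
    fun p hl hn => chain_pw_eq h p (not_infix_of_head hl hn)
  constructor
  · ext p
    simp only [Set.mem_setOf_eq, IsPath]
    constructor
    · rintro ⟨hc, hh, hl, hn⟩
      exact ⟨(key p hh hn).1.mp hc, hh, hl, hn⟩
    · rintro ⟨hc, hh, hl, hn⟩
      exact ⟨(key p hh hn).1.mpr hc, hh, hl, hn⟩
  · rintro p ⟨_, hh, _, hn⟩
    exact (key p hh hn).2

lemma dist_sigma_eq_of {G G' : WDigraph V} {s t : V}
    (hset : {p | G'.IsPath s t p} = {p | G.IsPath s t p})
    (hpw : ∀ p, G.IsPath s t p → G'.pw p = G.pw p) :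
    G'.dist s t = G.dist s t ∧ G'.sigma s t = G.sigma s t := by
  have hd : G'.dist s t = G.dist s t := by
    unfold dist
    rw [hset]
    exact congrArg sInf (Set.image_congr fun p hp => by rw [hpw p hp])
  refine ⟨hd, ?_⟩
  unfold sigma
  congr 1
  ext p
  simp only [SP, Set.mem_setOf_eq]
  constructor
  · rintro ⟨hp, he⟩
    have hp' : G.IsPath s t p := (Set.ext_iff.mp hset p).mp hp
    refine ⟨hp', ?_⟩
    rw [← hpw p hp', ← hd]; exact he
  · rintro ⟨hp, he⟩
    have hp' : G'.IsPath s t p := (Set.ext_iff.mp hset p).mpr hp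
    exact ⟨hp', by rw [hpw p hp, hd]; exact he⟩

/-- Distances and shortest-path counts into `u` and out of `v` are
not affected by the update: for every `s ∈ V`, `d'(s,u) = d(s,u)` and
`σ'_{su} = σ_{su}`; and for every `t ∈ V`, `d'(v,t) = d(v,t)` and `σ'_{vt} = σ_{vt}`. -/
theorem dist_sigma_unaffected (G G' : WDigraph V) (u v : V)
    (h : IsUpdate G G' u v) :
    (∀ s : V, G'.dist s u = G.dist s u ∧ G'.sigma s u = G.sigma s u) ∧
      (∀ t : V, G'.dist v t = G.dist v t ∧ G'.sigma v t = G.sigma v t) := by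
  constructor
  · intro s
    obtain ⟨hset, hpw⟩ := path_to_u_eq h s
    exact dist_sigma_eq_of hset hpw
  · intro t
    obtain ⟨hset, hpw⟩ := path_from_v_eq h t
    exact dist_sigma_eq_of hset hpw

end WDigraph
end
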